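/- Let V be a commutative unital quantale and m : (M,d) → (X,a) a V-functor. Then m is L-dense if and only if for every V-category (Y,b) and all V-functors f,g : X → Y with f∘m = g∘m one has f ≅ g. -/

import Mathlib

open IsQuantale Quantale


/-- a V-functor `m : (M,d) → (X,a)` is L-dense iff for all V-functors
`f, g : X → Y` with `f ∘ m = g ∘ m` one has `f ≅ g`. -/
theorem stmt9 {V : Type w} [CommMonoid V] [CompleteLattice V] [IsQuantale V]
    {M : Type u'} {X : Type u}
    (d : M → M → V) (hd1 : ∀ p, (1 : V) ≤ d p p)
    (hd2 : ∀ p q r, d p q * d q r ≤ d p r)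
    (a : X → X → V) (ha1 : ∀ x, (1 : V) ≤ a x x)
    (ha2 : ∀ x y z, a x y * a y z ≤ a x z)
    (m : M → X) (hm : ∀ p q, d p q ≤ a (m p) (m q)) :
    (∀ x x', a x x' = ⨆ p : M, a x (m p) * a (m p) x') ↔
      (∀ (Y : Type (max u w)) (b : Y → Y → V),
        (∀ y, (1 : V) ≤ b y y) → (∀ x y z, b x y * b y z ≤ b x z) →
        ∀ f g : X → Y,
          (∀ x x', a x x' ≤ b (f x) (f x')) →
          (∀ x x', a x x' ≤ b (g x) (g x')) →
          f ∘ m = g ∘ m →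
          (∀ x, (1 : V) ≤ b (f x) (g x)) ∧ (∀ x, (1 : V) ≤ b (g x) (f x))) := by
  constructor
  · -- L-dense → congruence
    intro h Y b hb1 hb2 f g hf hg hfg
    have key : ∀ (u v : X → Y), (∀ x x', a x x' ≤ b (u x) (u x')) →
        (∀ x x', a x x' ≤ b (v x) (v x')) → (∀ p, u (m p) = v (m p)) →
        ∀ x, (1 : V) ≤ b (u x) (v x) := by
      intro u v hu hv huv x
      calc (1 : V) ≤ a x x := ha1 x
        _ = ⨆ p : M, a x (m p) * a (m p) x := h x x
        _ ≤ b (u x) (v x) := by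
          apply iSup_le
          intro p
          have h1 : a x (m p) ≤ b (u x) (v (m p)) := (huv p ▸ hu x (m p))
          have h2 : a (m p) x ≤ b (v (m p)) (v x) := hv (m p) x
          exact le_trans (mul_le_mul' h1 h2) (hb2 _ _ _)
    exact ⟨key f g hf hg (fun p => congrFun hfg p),
           key g f hg hf (fun p => (congrFun hfg p).symm)⟩
  · -- congruence → L-dense
    intro H x x'
    set b : (X → V) → (X → V) → V :=
      fun φ ψ => ⨅ z, φ z ⇨ᵣ ψ z with hb
    have hres : ∀ u v w : V, w ≤ u ⇨ᵣ v ↔ u * w ≤ v := fun u v w =>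
      Quantale.rightMulResiduation_le_iff_mul_le
    set f : X → (X → V) := fun x => fun z => a z x with hfdef
    set g : X → (X → V) := fun x => fun z => ⨆ p : M, a z (m p) * a (m p) x with hgdef
    have hb1 : ∀ φ, (1 : V) ≤ b φ φ := by
      intro φ; refine le_iInf fun z => (hres _ _ _).2 (by simp)
    have hb2 : ∀ φ ψ χ, b φ ψ * b ψ χ ≤ b φ χ := by
      intro φ ψ χ
      refine le_iInf fun z => (hres _ _ _).2 ?_
      have h1 : φ z * (φ z ⇨ᵣ ψ z) ≤ ψ z := (hres _ _ _).1 le_rfl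
      have h2 : ψ z * (ψ z ⇨ᵣ χ z) ≤ χ z := (hres _ _ _).1 le_rfl
      calc φ z * (b φ ψ * b ψ χ) = φ z * b φ ψ * b ψ χ := (mul_assoc _ _ _).symm
        _ ≤ φ z * (φ z ⇨ᵣ ψ z) * (ψ z ⇨ᵣ χ z) :=
            mul_le_mul' (mul_le_mul_right (iInf_le _ z) _) (iInf_le _ z)
        _ ≤ ψ z * (ψ z ⇨ᵣ χ z) := mul_le_mul_left h1 _
        _ ≤ χ z := h2
    have hf : ∀ x x', a x x' ≤ b (f x) (f x') := by
      intro x x'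
      refine le_iInf fun z => (hres _ _ _).2 ?_
      exact ha2 z x x'
    have hg : ∀ x x', a x x' ≤ b (g x) (g x') := by
      intro x x'
      refine le_iInf fun z => (hres _ _ _).2 ?_
      simp only [hgdef]
      rw [iSup_mul_distrib]
      apply iSup_le; intro p
      refine le_trans ?_ (le_iSup _ p)
      calc a z (m p) * a (m p) x * a x x'
          ≤ a z (m p) * (a (m p) x * a x x') := le_of_eq (mul_assoc _ _ _)
        _ ≤ a z (m p) * a (m p) x' := mul_le_mul_right (ha2 _ _ _) _
    have hfg : f ∘ m = g ∘ m := by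
      funext q z
      simp only [Function.comp, hfdef, hgdef]
      apply le_antisymm
      · refine le_trans ?_ (le_iSup _ q)
        calc a z (m q) = a z (m q) * 1 := (mul_one _).symm
          _ ≤ a z (m q) * a (m q) (m q) := mul_le_mul_right (ha1 _) _
      · exact iSup_le fun p => ha2 _ _ _
    obtain ⟨h1, _⟩ := H (X → V) b hb1 hb2 f g hf hg hfg
    apply le_antisymm
    · have := le_trans (h1 x') (iInf_le _ x)
      have := (hres _ _ _).1 this
      simpa using this
    · exact iSup_le fun p => ha2 _ _ _
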